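/- arXiv:2110.14888 — 3 statements merged into one kernel-verified Lean document; each statement's English description precedes it below -/
import Mathlib

section
/- Let f: ℕ → ℝ satisfy f(0) = 0 and f(t+1) ≥ c·F + (1 - γc)·f(t) with F ≥ 0, c > 0, γ ≥ 1, γc ≤ 1. Then f(T) ≥ (F/γ)·(1 - exp(-c·γ·T)) for all T ≥ 0. -/
theorem recursion_exp_bound (f : ℕ → ℝ) (c γ F : ℝ)
    (hF : 0 ≤ F) (hc : 0 < c) (hγ : 1 ≤ γ) (hγc : γ * c ≤ 1)
    (h0 : f 0 = 0)
    (hrec : ∀ t, f (t + 1) ≥ c * F + (1 - γ * c) * f t) :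
    ∀ T : ℕ, f T ≥ (F / γ) * (1 - Real.exp (-(c * γ * T))) := by
  have hγ0 : 0 < γ := lt_of_lt_of_le one_pos hγ
  have hγc0 : 0 < γ * c := mul_pos hγ0 hc
  have hnn : 0 ≤ 1 - γ * c := by linarith
  have key : ∀ T : ℕ, f T ≥ (F / γ) * (1 - (1 - γ * c) ^ T) := by
    intro T
    induction T with
    | zero => simp [h0]
    | succ t ih =>
      have h1 := hrec t
      have h2 : (1 - γ * c) * f t ≥ (1 - γ * c) * ((F / γ) * (1 - (1 - γ * c) ^ t)) :=
        mul_le_mul_of_nonneg_left ih hnn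
      have h3 : c * F + (1 - γ * c) * ((F / γ) * (1 - (1 - γ * c) ^ t))
          = (F / γ) * (1 - (1 - γ * c) ^ (t + 1)) := by
        field_simp
        ring
      linarith
  intro T
  have hpow : (1 - γ * c) ^ T ≤ Real.exp (-(c * γ * T)) := by
    have h1 : 1 - γ * c ≤ Real.exp (-(γ * c)) := by
      have := Real.add_one_le_exp (-(γ * c)); linarith
    calc (1 - γ * c) ^ T ≤ (Real.exp (-(γ * c))) ^ T := pow_le_pow_left₀ hnn h1 T
      _ = Real.exp (-(c * γ * T)) := by
        rw [← Real.exp_nat_mul]; ring_nf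
  have hFγ : 0 ≤ F / γ := div_nonneg hF hγ0.le
  have := key T
  nlinarith [mul_le_mul_of_nonneg_left hpow hFγ]
end

section
/- For a ≥ 2, the function g(x) = a/(x·log(x/(x-1))) + 1/x is monotonically increasing on the interval (1, ∞). -/
open Real Set

private lemma phi_hasDeriv (s : ℝ) (h0 : 0 < s) :
    HasDerivAt (fun s : ℝ => 2 / s - 2 - (Real.log s) ^ 2 + 2 * Real.log s)
      (2 * -(s ^ 2)⁻¹ - 2 * Real.log s ^ 1 * s⁻¹ + 2 * s⁻¹) s := by
  have hlog : HasDerivAt Real.log s⁻¹ s := Real.hasDerivAt_log h0.ne'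
  have h1 : HasDerivAt (fun s : ℝ => 2 / s) (2 * -(s ^ 2)⁻¹) s := by
    simpa [div_eq_mul_inv] using (hasDerivAt_inv h0.ne').const_mul 2
  exact ((h1.sub_const 2).sub (hlog.pow 2)).add (hlog.const_mul 2)

private lemma key_ineq (s : ℝ) (h0 : 0 < s) (h1 : s ≤ 1) :
    (Real.log s) ^ 2 - 2 * Real.log s ≤ 2 / s - 2 := by
  set φ : ℝ → ℝ := fun s => 2 / s - 2 - (Real.log s) ^ 2 + 2 * Real.log s with hφ
  have hanti : AntitoneOn φ (Set.Ioc 0 1) := by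
    apply antitoneOn_of_deriv_nonpos (convex_Ioc 0 1)
    · intro s hs
      exact (phi_hasDeriv s hs.1).continuousAt.continuousWithinAt
    · intro s hs
      rw [interior_Ioc] at hs
      exact (phi_hasDeriv s hs.1).differentiableAt.differentiableWithinAt
    · intro s hs
      rw [interior_Ioc] at hs
      rw [(phi_hasDeriv s hs.1).deriv]
      have hsinv : 0 < s⁻¹ := inv_pos.2 hs.1
      have hlb : 1 - s⁻¹ ≤ Real.log s := Real.one_sub_inv_le_log_of_pos hs.1
      have hmul := mul_le_mul_of_nonneg_right hlb hsinv.le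
      have hsq : (s ^ 2)⁻¹ = s⁻¹ * s⁻¹ := by
        rw [sq, mul_inv]
      rw [hsq]
      nlinarith [hmul, sq_nonneg s⁻¹]
  have := hanti (Set.mem_Ioc.2 ⟨h0, h1⟩) (Set.mem_Ioc.2 ⟨one_pos, le_refl 1⟩) h1
  simp only [hφ, Real.log_one] at this
  norm_num at this
  linarith

theorem g_monotone (a : ℝ) (ha : 2 ≤ a) :
    MonotoneOn (fun x : ℝ => a / (x * Real.log (x / (x - 1))) + 1 / x)
      (Set.Ioi (1 : ℝ)) := by
  set f : ℝ → ℝ := fun x => a / (x * Real.log (x / (x - 1))) + 1 / x with hf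
  -- derivative at each x > 1
  have hderiv : ∀ x : ℝ, 1 < x →
      HasDerivAt f
        ((0 * (x * Real.log (x / (x - 1))) -
            a * (1 * Real.log (x / (x - 1)) + x * (x⁻¹ - (x - 1)⁻¹))) /
          (x * Real.log (x / (x - 1))) ^ 2 + -(x ^ 2)⁻¹) x := by
    intro x hx
    have hx0 : (0 : ℝ) < x := lt_trans one_pos hx
    have hxm : (0 : ℝ) < x - 1 := by linarith
    have hL : (1 : ℝ) < x / (x - 1) := by
      rw [lt_div_iff₀ hxm]; linarith
    have hLpos : 0 < Real.log (x / (x - 1)) := Real.log_pos hL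
    -- deriv of log(x/(x-1)) : agrees with log x - log (x-1) on Ioi 1
    have hlog : HasDerivAt (fun x : ℝ => Real.log (x / (x - 1))) (x⁻¹ - (x - 1)⁻¹) x := by
      have h1 : HasDerivAt (fun x : ℝ => Real.log x - Real.log (x - 1)) (x⁻¹ - (x - 1)⁻¹) x := by
        have ha : HasDerivAt Real.log x⁻¹ x := Real.hasDerivAt_log hx0.ne'
        have hb : HasDerivAt (fun x : ℝ => Real.log (x - 1)) ((x - 1)⁻¹) x := by
          have hid : HasDerivAt (fun x : ℝ => x - 1) 1 x := (hasDerivAt_id x).sub_const 1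
          simpa [Function.comp_def] using (Real.hasDerivAt_log hxm.ne').comp x hid
        exact ha.sub hb
      apply h1.congr_of_eventuallyEq
      filter_upwards [Ioi_mem_nhds hx] with y hy
      have hy1 : (1 : ℝ) < y := hy
      have hy0 : (0 : ℝ) < y := lt_trans one_pos hy1
      have hym : (0 : ℝ) < y - 1 := by linarith
      rw [Real.log_div hy0.ne' hym.ne']
    have hD : HasDerivAt (fun x : ℝ => x * Real.log (x / (x - 1)))
        (1 * Real.log (x / (x - 1)) + x * (x⁻¹ - (x - 1)⁻¹)) x :=
      (hasDerivAt_id x).mul hlog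
    have hDne : x * Real.log (x / (x - 1)) ≠ 0 := by positivity
    have hquot : HasDerivAt (fun x : ℝ => a / (x * Real.log (x / (x - 1))))
        ((0 * (x * Real.log (x / (x - 1))) -
            a * (1 * Real.log (x / (x - 1)) + x * (x⁻¹ - (x - 1)⁻¹))) /
          (x * Real.log (x / (x - 1))) ^ 2) x :=
      (hasDerivAt_const x a).div hD hDne
    have hinv : HasDerivAt (fun x : ℝ => 1 / x) (-(x ^ 2)⁻¹) x := by
      simpa [one_div] using hasDerivAt_inv hx0.ne'
    exact hquot.add hinv
  apply monotoneOn_of_deriv_nonneg (convex_Ioi 1)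
  · intro x hx
    exact (hderiv x hx).continuousAt.continuousWithinAt
  · intro x hx
    rw [interior_Ioi] at hx
    exact (hderiv x hx).differentiableAt.differentiableWithinAt
  · intro x hx
    rw [interior_Ioi] at hx
    replace hx : 1 < x := hx
    rw [(hderiv x hx).deriv]
    have hx0 : (0 : ℝ) < x := lt_trans one_pos hx
    have hxm : (0 : ℝ) < x - 1 := by linarith
    have hL : (1 : ℝ) < x / (x - 1) := by
      rw [lt_div_iff₀ hxm]; linarith
    set L := Real.log (x / (x - 1)) with hLdef
    have hLpos : 0 < L := Real.log_pos hL
    -- key inequality with s = (x-1)/x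
    have hs0 : 0 < (x - 1) / x := div_pos hxm hx0
    have hs1 : (x - 1) / x ≤ 1 := by
      rw [div_le_one hx0]; linarith
    have hlogs : Real.log ((x - 1) / x) = -L := by
      rw [hLdef, ← Real.log_inv]
      congr 1
      field_simp
    have hkey := key_ineq ((x - 1) / x) hs0 hs1
    rw [hlogs] at hkey
    have h2s : 2 / ((x - 1) / x) = 2 * x / (x - 1) := by
      field_simp
    rw [h2s] at hkey
    -- hkey : L^2 + 2L ≤ 2x/(x-1) - 2 = 2/(x-1)
    have hkey2 : L ^ 2 + 2 * L ≤ 2 / (x - 1) := by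
      have : 2 * x / (x - 1) - 2 = 2 / (x - 1) := by field_simp; ring
      nlinarith [hkey]
    -- so L^2 ≤ 2 * ((x-1)⁻¹ - L) ≤ a * ((x-1)⁻¹ - L)
    have hgap : L ^ 2 ≤ 2 * ((x - 1)⁻¹ - L) := by
      have h3 : 2 / (x - 1) = 2 * (x - 1)⁻¹ := by rw [div_eq_mul_inv]
      linarith
    have hgap0 : 0 ≤ (x - 1)⁻¹ - L := by nlinarith [sq_nonneg L]
    have hgapa : L ^ 2 ≤ a * ((x - 1)⁻¹ - L) := by nlinarith
    -- now show the derivative expression is nonneg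
    have hxne : x ≠ 0 := hx0.ne'
    have hxmne : x - 1 ≠ 0 := hxm.ne'
    have hLne : L ≠ 0 := hLpos.ne'
    have heq : (0 * (x * L) - a * (1 * L + x * (x⁻¹ - (x - 1)⁻¹))) / (x * L) ^ 2 + -(x ^ 2)⁻¹
        = (a * ((x - 1)⁻¹ - L) - L ^ 2) / (x ^ 2 * L ^ 2) := by
      field_simp
      ring
    rw [heq]
    apply div_nonneg
    · linarith
    · positivity
end

section
/- Let f be a monotone nonnegative sequence function with f(∅)=0, let σ be a sequence of length K with f(σ) = F, and suppose a greedy sequence x₁, x₂, ... satisfies, for each t, Δ(x_{t+1} | x_{1:t}) ≥ (1/α)·max_x Δ(x | x_{1:t}), the submodularity ratio bound Δ(σ_i | x_{1:t} ⊕ σ_{1:i-1}) ≤ (1/ρ)·Δ(σ_i | x_{1:t}) for all i, t, and the backward curvature bound f(x_{1:t}) - f(x_{1:t} ⊕ σ) + f(σ) ≤ γ·f(x_{1:t}). Then for all t: f(σ) - γ·f(x_{1:t}) ≤ (K/ρ)·max_x Δ(x | x_{1:t}), and hence f(x_{1:t+1}) ≥ (ρ/(αK))·f(σ) + (1 - γρ/(αK))·f(x_{1:t}).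 -/
theorem greedy_recursion_derivation {X : Type*} [Fintype X] [Nonempty X]
    (f : List X → ℝ) (h0 : f [] = 0)
    (hmono : ∀ (s : List X) (x : X), f s ≤ f (s ++ [x]))
    (σ : List X) (K : ℕ) (hK : σ.length = K) (F : ℝ) (hF : f σ = F)
    (α ρ γ : ℝ) (hα : 1 ≤ α) (hρ0 : 0 < ρ) (hρ1 : ρ ≤ 1) (hγ : 1 ≤ γ)
    (xs : ℕ → X)
    -- greedy prefix of length t
    (pre : ℕ → List X) (hpre : ∀ t, pre t = (List.range t).map xs)
    -- α-approximate greedy rule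
    (hgreedy : ∀ t, f (pre t ++ [xs t]) - f (pre t) ≥
      (1 / α) * ⨆ x : X, (f (pre t ++ [x]) - f (pre t)))
    -- pointwise submodularity ratio bound
    (hρ : ∀ t, ∀ i (hi : i < σ.length),
      f ((pre t ++ σ.take i) ++ [σ.get ⟨i, hi⟩]) - f (pre t ++ σ.take i) ≤
        (1 / ρ) * (f (pre t ++ [σ.get ⟨i, hi⟩]) - f (pre t)))
    -- pointwise backward curvature bound
    (hγc : ∀ t, f (pre t) - f (pre t ++ σ) + f σ ≤ γ * f (pre t)) :
    ∀ t, F - γ * f (pre t) ≤ ((K : ℝ) / ρ) * ⨆ x : X, (f (pre t ++ [x]) - f (pre t)) ∧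
      f (pre (t + 1)) ≥ (ρ / (α * K)) * F + (1 - γ * ρ / (α * K)) * f (pre t) := by
  have hmono' : ∀ (s l : List X), f s ≤ f (s ++ l) := by
    intro s l
    induction l generalizing s with
    | nil => simp
    | cons a l ih =>
      calc f s ≤ f (s ++ [a]) := hmono s a
        _ ≤ f ((s ++ [a]) ++ l) := ih _
        _ = f (s ++ a :: l) := by rw [List.append_assoc]; rfl
  have hnn : ∀ s : List X, 0 ≤ f s := fun s => by
    have := hmono' [] s; simpa [h0] using this
  intro t
  set S := ⨆ x : X, (f (pre t ++ [x]) - f (pre t)) with hS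
  have hbdd : BddAbove (Set.range fun x : X => f (pre t ++ [x]) - f (pre t)) :=
    Set.Finite.bddAbove (Set.finite_range _)
  have hSle : ∀ x : X, f (pre t ++ [x]) - f (pre t) ≤ S := fun x => le_ciSup hbdd x
  have hS0 : 0 ≤ S := by
    obtain ⟨x⟩ := ‹Nonempty X›
    have h1 := hSle x
    have h2 := hmono (pre t) x
    linarith
  have htel : f (pre t ++ σ) - f (pre t) ≤ ((K:ℝ)/ρ) * S := by
    have key : ∀ n, n ≤ σ.length → f (pre t ++ σ.take n) - f (pre t) ≤ ((n:ℝ)/ρ) * S := by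
      intro n hn
      induction n with
      | zero => simp
      | succ m ih =>
        have hmlt : m < σ.length := hn
        have hstep : σ.take (m+1) = σ.take m ++ [σ.get ⟨m, hmlt⟩] := by
          rw [List.take_succ]
          simp [List.getElem?_eq_getElem hmlt]
        have h1 := hρ t m hmlt
        have h2 := hSle (σ.get ⟨m, hmlt⟩)
        have ihm := ih (Nat.le_of_succ_le hn)
        have hρ' : (1/ρ) * (f (pre t ++ [σ.get ⟨m, hmlt⟩]) - f (pre t)) ≤ (1/ρ) * S :=
          mul_le_mul_of_nonneg_left h2 (by positivity)
        rw [hstep, ← List.append_assoc]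
        push_cast
        have heq : ((m:ℝ)+1)/ρ * S = (m:ℝ)/ρ * S + (1/ρ)*S := by ring
        rw [heq]
        linarith
    have := key σ.length le_rfl
    rw [List.take_length, hK] at this
    exact this
  have hpart1 : F - γ * f (pre t) ≤ ((K:ℝ)/ρ) * S := by
    have hc := hγc t
    rw [hF] at hc
    linarith
  refine ⟨hpart1, ?_⟩
  have hpre1 : pre (t+1) = pre t ++ [xs t] := by
    rw [hpre, hpre, List.range_succ, List.map_append]; rfl
  have hg := hgreedy t
  rw [← hS, ← hpre1] at hg
  by_cases hK0 : K = 0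
  · subst hK0
    have hmt : f (pre t) ≤ f (pre (t+1)) := by rw [hpre1]; exact hmono _ _
    simp only [Nat.cast_zero, mul_zero, div_zero, zero_mul]
    linarith
  · have hKpos : (0:ℝ) < K := Nat.cast_pos.mpr (Nat.pos_of_ne_zero hK0)
    have hα0 : (0:ℝ) < α := lt_of_lt_of_le one_pos hα
    have h3 : ρ / K * (F - γ * f (pre t)) ≤ S := by
      have h := mul_le_mul_of_nonneg_left hpart1 (le_of_lt (div_pos hρ0 hKpos))
      calc ρ/K * (F - γ*f (pre t)) ≤ ρ/K * (((K:ℝ)/ρ)*S) := h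
        _ = S := by field_simp
    have h4 : f (pre (t+1)) ≥ f (pre t) + (1/α) * S := by linarith
    have h5 : (1/α) * (ρ/K * (F - γ*f (pre t))) ≤ (1/α) * S :=
      mul_le_mul_of_nonneg_left h3 (by positivity)
    have heq : (1/α) * (ρ/(K:ℝ) * (F - γ*f (pre t)))
        = (ρ/(α*K))*F - (γ*ρ/(α*K))*f (pre t) := by
      field_simp
    rw [heq] at h5
    have : (1 - γ * ρ / (α * K)) * f (pre t)
        = f (pre t) - (γ*ρ/(α*K))*f (pre t) := by ring
    rw [ge_iff_le, this]
    linarith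
end
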